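/- Let (ξ_n)_{n ≥ 1} be square-integrable real-valued random variables on a probability space. Suppose there exist constants C > 0, γ > 0, α ∈ (0,1], a real number σ², and a real sequence (c_k)_{k ≥ 1} such that: (i) |Var(ξ_n) − σ²| ≤ C e^{−γ n^α} for all n ≥ 1; (ii) |Cov(ξ_j, ξ_n) − c_{n−j}| ≤ C e^{−γ j^α} for all 1 ≤ j < n; and (iii) |Cov(ξ_j, ξ_n)| ≤ C e^{−γ (n−j)^α} for all 1 ≤ j < n. Then the series ∑_{k ≥ 1} c_k converges absolutely, and (1/N)·Var(∑_{n=1}^N ξ_n) converges as N → ∞ to σ² + 2·∑_{k ≥ 1} c_k. -/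

import Mathlib

open MeasureTheory ProbabilityTheory Filter

/-- The covariance of two real random variables. -/
noncomputable def cov {Ω : Type*} [MeasurableSpace Ω] (X Y : Ω → ℝ) (P : Measure Ω) : ℝ :=
  ∫ ω, (X ω - ∫ ω', X ω' ∂P) * (Y ω - ∫ ω', Y ω' ∂P) ∂P


lemma aux_summable_exp {b α : ℝ} (hb : 0 < b) (hα : 0 < α) :
    Summable (fun k : ℕ => Real.exp (-b * ((k : ℝ) + 1) ^ α)) := by
  have hg : Summable (fun k : ℕ => ((k : ℝ) + 1) ^ (-2 : ℝ)) := by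
    have := (Real.summable_nat_rpow (p := (-2 : ℝ))).2 (by norm_num)
    have h1 := (summable_nat_add_iff 1).2 this
    simpa [Nat.cast_add] using h1
  apply summable_of_isBigO_nat hg
  rw [Asymptotics.isBigO_iff]
  refine ⟨1, ?_⟩
  have h0 : Tendsto (fun x : ℝ => x ^ (2 : ℝ) * Real.exp (-b * x ^ α)) atTop (nhds 0) := by
    have h1 := tendsto_rpow_mul_exp_neg_mul_atTop_nhds_zero (2 / α) b hb
    have h2 : Tendsto (fun x : ℝ => x ^ α) atTop atTop := tendsto_rpow_atTop hα
    have h3 := h1.comp h2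
    apply h3.congr'
    filter_upwards [eventually_ge_atTop (0 : ℝ)] with x hx
    simp only [Function.comp]
    rw [← Real.rpow_mul hx]
    congr 2
    field_simp
  have h4 : Tendsto (fun k : ℕ => ((k : ℝ) + 1) ^ (2 : ℝ) * Real.exp (-b * ((k : ℝ) + 1) ^ α))
      atTop (nhds 0) :=
    h0.comp (tendsto_atTop_add_const_right atTop 1 tendsto_natCast_atTop_atTop)
  have h5 := h4.eventually (eventually_le_nhds (by norm_num : (0:ℝ) < 1))
  filter_upwards [h5] with k hk
  have hk1 : (0 : ℝ) < (k : ℝ) + 1 := by positivity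
  have h2pos : (0:ℝ) < ((k:ℝ)+1) ^ (2:ℝ) := Real.rpow_pos_of_pos hk1 _
  rw [Real.norm_eq_abs, Real.norm_eq_abs, abs_of_nonneg (Real.exp_pos _).le,
    abs_of_nonneg (Real.rpow_nonneg hk1.le _), Real.rpow_neg hk1.le, one_mul,
    ← one_div, le_div_iff₀ h2pos]
  linarith [hk]

lemma aux_sum_decomp (g : ℕ → ℕ → ℝ) (hsym : ∀ j n, g j n = g n j) (N : ℕ) :
    ∑ j ∈ Finset.Icc 1 N, ∑ n ∈ Finset.Icc 1 N, g j n
      = ∑ n ∈ Finset.Icc 1 N, g n n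
        + 2 * ∑ n ∈ Finset.Icc 1 N, ∑ j ∈ Finset.Ico 1 n, g j n := by
  induction N with
  | zero => simp
  | succ N ih =>
    have h1 : ∀ f : ℕ → ℝ, ∑ i ∈ Finset.Icc 1 (N+1), f i = ∑ i ∈ Finset.Icc 1 N, f i + f (N+1) :=
      fun f => Finset.sum_Icc_succ_top (by omega) f
    have hIco : Finset.Ico 1 (N+1) = Finset.Icc 1 N := by
      rw [Finset.Ico_add_one_right_eq_Icc]
    simp only [h1, Finset.sum_add_distrib]
    rw [ih, hIco]
    have hswap : ∑ j ∈ Finset.Icc 1 N, g (1+N) j = ∑ j ∈ Finset.Icc 1 N, g j (1+N) :=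
      Finset.sum_congr rfl (fun j _ => hsym _ _)
    ring_nf
    linarith [hswap]

lemma aux_integrable_mul {Ω : Type*} [MeasurableSpace Ω] {P : Measure Ω}
    {f g : Ω → ℝ} (hf : MemLp f 2 P) (hg : MemLp g 2 P) :
    Integrable (fun ω => f ω * g ω) P := by
  have h := hg.smul (𝕜 := ℝ) hf (p := 2) (q := 2) (r := 1)
    (hpqr := ⟨by simpa using ENNReal.inv_two_add_inv_two⟩)
  rw [memLp_one_iff_integrable] at h
  exact h

lemma aux_cov_comm {Ω : Type*} [MeasurableSpace Ω] {P : Measure Ω} (X Y : Ω → ℝ) :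
    cov X Y P = cov Y X P := by
  unfold cov
  congr 1
  funext ω
  ring

lemma aux_var_eq_cov {Ω : Type*} [MeasurableSpace Ω] {P : Measure Ω} [IsProbabilityMeasure P]
    {X : Ω → ℝ} (hX : MemLp X 2 P) : variance X P = cov X X P := by
  rw [variance_eq_integral hX.aestronglyMeasurable.aemeasurable]
  unfold cov
  apply integral_congr_ae
  filter_upwards with ω
  simp [sq]

lemma aux_var_sum {Ω : Type*} [MeasurableSpace Ω] {P : Measure Ω} [IsProbabilityMeasure P]
    (ξ : ℕ → Ω → ℝ) (N : ℕ) (hmem : ∀ n ∈ Finset.Icc 1 N, MemLp (ξ n) 2 P) :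
    variance (fun ω => ∑ n ∈ Finset.Icc 1 N, ξ n ω) P
      = ∑ j ∈ Finset.Icc 1 N, ∑ n ∈ Finset.Icc 1 N, cov (ξ j) (ξ n) P := by
  set s := Finset.Icc 1 N with hs
  set f : ℕ → Ω → ℝ := fun n ω => ξ n ω - ∫ ω', ξ n ω' ∂P with hf
  have hf2 : ∀ n ∈ s, MemLp (f n) 2 P := fun n hn => (hmem n hn).sub (memLp_const _)
  have hprod : ∀ j ∈ s, ∀ n ∈ s, Integrable (fun ω => f j ω * f n ω) P :=
    fun j hj n hn => aux_integrable_mul (hf2 j hj) (hf2 n hn)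
  set Sf : Ω → ℝ := fun ω => ∑ n ∈ s, ξ n ω with hSf
  have hS2 : MemLp Sf 2 P := by
    have h := memLp_finset_sum' s hmem
    rwa [show (∑ i ∈ s, ξ i) = Sf from funext fun ω => by simp [hSf]] at h
  have hES : (∫ ω, Sf ω ∂P) = ∑ n ∈ s, ∫ ω', ξ n ω' ∂P :=
    integral_finset_sum s (fun n hn => (hmem n hn).integrable one_le_two)
  rw [variance_eq_integral hS2.aestronglyMeasurable.aemeasurable]
  have h2 : (fun ω => (((Sf - fun _ => ∫ ω', Sf ω' ∂P : Ω → ℝ)) ^ (2:ℕ)) ω)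
      =ᵐ[P] fun ω => ∑ j ∈ s, ∑ n ∈ s, f j ω * f n ω := by
    filter_upwards with ω
    simp only [Pi.pow_apply, Pi.sub_apply, hES, hSf, ← Finset.sum_sub_distrib, sq,
      Finset.sum_mul_sum, hf]
    rw [integral_finset_sum s (fun n hn => (hmem n hn).integrable one_le_two),
      ← Finset.sum_sub_distrib, Finset.sum_mul_sum]
  calc (∫ ω, (((Sf - fun _ => ∫ ω', Sf ω' ∂P : Ω → ℝ)) ^ (2:ℕ)) ω ∂P)
      = ∫ ω, ∑ j ∈ s, ∑ n ∈ s, f j ω * f n ω ∂P := integral_congr_ae h2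
    _ = ∑ j ∈ s, ∑ n ∈ s, ∫ ω, f j ω * f n ω ∂P := by
        rw [integral_finset_sum s (fun j hj => integrable_finset_sum s (fun n hn => hprod j hj n hn))]
        exact Finset.sum_congr rfl fun j hj =>
          integral_finset_sum s (fun n hn => hprod j hj n hn)
    _ = ∑ j ∈ s, ∑ n ∈ s, cov (ξ j) (ξ n) P := rfl

/-- **Limiting variance rate for a weakly dependent stationary-like sequence.**
If `(ξ_n)_{n≥1}` are square-integrable with `|Var(ξ_n) − σ²| ≤ C e^{−γ n^α}`,
`|Cov(ξ_j, ξ_n) − c_{n−j}| ≤ C e^{−γ j^α}` and `|Cov(ξ_j, ξ_n)| ≤ C e^{−γ (n−j)^α}`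
for `1 ≤ j < n`, then `∑_{k≥1} c_k` converges absolutely and
`Var(∑_{n=1}^N ξ_n)/N → σ² + 2 ∑_{k≥1} c_k`. -/
theorem variance_rate_of_weakly_dependent
    {Ω : Type*} [MeasurableSpace Ω] {P : Measure Ω} [IsProbabilityMeasure P]
    (ξ : ℕ → Ω → ℝ) (hℒ2 : ∀ n : ℕ, 1 ≤ n → MemLp (ξ n) 2 P)
    (C γ α σ2 : ℝ) (c : ℕ → ℝ)
    (hC : 0 < C) (hγ : 0 < γ) (hα : α ∈ Set.Ioc (0 : ℝ) 1)
    (hvar : ∀ n : ℕ, 1 ≤ n →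
      |variance (ξ n) P - σ2| ≤ C * Real.exp (-γ * (n : ℝ) ^ α))
    (hcov_st : ∀ j n : ℕ, 1 ≤ j → j < n →
      |cov (ξ j) (ξ n) P - c (n - j)| ≤ C * Real.exp (-γ * (j : ℝ) ^ α))
    (hcov_mix : ∀ j n : ℕ, 1 ≤ j → j < n →
      |cov (ξ j) (ξ n) P| ≤ C * Real.exp (-γ * ((n : ℝ) - (j : ℝ)) ^ α)) :
    Summable (fun k : ℕ => |c (k + 1)|) ∧
    Tendsto (fun N : ℕ => variance (fun ω => ∑ n ∈ Finset.Icc 1 N, ξ n ω) P / (N : ℝ))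
      atTop (nhds (σ2 + 2 * ∑' k : ℕ, c (k + 1))) := by
  obtain ⟨hα0, hα1⟩ := hα
  -- the exponential weight
  set e : ℕ → ℝ := fun k => Real.exp (-(γ/2) * (k:ℝ)^α) with he
  have he_pos : ∀ k, 0 < e k := fun k => Real.exp_pos _
  have he_sum : Summable (fun k : ℕ => e (k+1)) := by
    have h := aux_summable_exp (half_pos hγ) hα0
    apply h.congr
    intro k
    simp only [he]
    norm_num
  set E : ℝ := ∑' k, e (k+1) with hE
  have hE0 : 0 ≤ E := tsum_nonneg (fun k => (he_pos _).le)
  -- partial sums of e are bounded by E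
  have hrange_le : ∀ M : ℕ, ∑ i ∈ Finset.range M, e (i+1) ≤ E :=
    fun M => Summable.sum_le_tsum (Finset.range M) (fun i _ => (he_pos _).le) he_sum
  have hsum_le : ∀ N : ℕ, ∑ n ∈ Finset.Icc 1 N, e n ≤ E := by
    intro N
    have h1 : Finset.Icc 1 N = Finset.Ico 1 (N+1) := (Finset.Ico_add_one_right_eq_Icc 1 N).symm
    rw [h1, Finset.sum_Ico_eq_sum_range]
    simp only [add_tsub_cancel_right]
    calc ∑ i ∈ Finset.range N, e (1+i) = ∑ i ∈ Finset.range N, e (i+1) := by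
          exact Finset.sum_congr rfl fun i _ => by rw [add_comm]
      _ ≤ E := hrange_le N
  -- the key exponential product bound
  have hprodE : ∀ x y z : ℝ, 0 ≤ x → 0 ≤ y → x ≤ z → y ≤ z →
      Real.exp (-γ * z^α) ≤ Real.exp (-(γ/2) * x^α) * Real.exp (-(γ/2) * y^α) := by
    intro x y z hx hy hxz hyz
    rw [← Real.exp_add, Real.exp_le_exp]
    have h1 : x^α ≤ z^α := Real.rpow_le_rpow hx hxz hα0.le
    have h2 : y^α ≤ z^α := Real.rpow_le_rpow hy hyz hα0.le
    nlinarith [hγ]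
  -- e^{-γ n^α} ≤ e n
  have hee : ∀ n : ℕ, Real.exp (-γ * (n:ℝ)^α) ≤ e n := by
    intro n
    rw [he, Real.exp_le_exp]
    have : (0:ℝ) ≤ (n:ℝ)^α := Real.rpow_nonneg (Nat.cast_nonneg n) α
    nlinarith [hγ]
  have hprodN : ∀ x y z : ℕ, x ≤ z → y ≤ z →
      Real.exp (-γ * ((z:ℕ):ℝ)^α) ≤ e x * e y := fun x y z hxz hyz =>
    hprodE (x:ℝ) (y:ℝ) (z:ℝ) (Nat.cast_nonneg _) (Nat.cast_nonneg _)
      (Nat.cast_le.mpr hxz) (Nat.cast_le.mpr hyz)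
  -- bound on |c k|
  have hc_bound : ∀ k : ℕ, 1 ≤ k → |c k| ≤ C * Real.exp (-γ * (k:ℝ)^α) := by
    intro k hk
    have hub : ∀ j : ℕ, 1 ≤ j →
        |c k| ≤ C * Real.exp (-γ * (k:ℝ)^α) + C * Real.exp (-γ * (j:ℝ)^α) := by
      intro j hj
      have hlt : j < j + k := by omega
      have h1 := hcov_st j (j+k) hj hlt
      have h2 := hcov_mix j (j+k) hj hlt
      rw [Nat.add_sub_cancel_left] at h1
      rw [show ((j+k:ℕ):ℝ) - (j:ℝ) = (k:ℝ) by push_cast; ring] at h2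
      calc |c k| = |(c k - cov (ξ j) (ξ (j+k)) P) + cov (ξ j) (ξ (j+k)) P| := by ring_nf
        _ ≤ |c k - cov (ξ j) (ξ (j+k)) P| + |cov (ξ j) (ξ (j+k)) P| := abs_add_le _ _
        _ = |cov (ξ j) (ξ (j+k)) P - c k| + |cov (ξ j) (ξ (j+k)) P| := by rw [abs_sub_comm]
        _ ≤ C * Real.exp (-γ * (j:ℝ)^α) + C * Real.exp (-γ * (k:ℝ)^α) := add_le_add h1 h2
        _ = C * Real.exp (-γ * (k:ℝ)^α) + C * Real.exp (-γ * (j:ℝ)^α) := by ring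
    have ht : Tendsto (fun j : ℕ => C * Real.exp (-γ * (k:ℝ)^α) + C * Real.exp (-γ * (j:ℝ)^α))
        atTop (nhds (C * Real.exp (-γ * (k:ℝ)^α) + C * 0)) := by
      apply Tendsto.const_add
      apply Tendsto.const_mul
      apply Real.tendsto_exp_atBot.comp
      have h1 : Tendsto (fun j : ℕ => (j:ℝ)^α) atTop atTop :=
        (tendsto_rpow_atTop hα0).comp tendsto_natCast_atTop_atTop
      exact h1.const_mul_atTop_of_neg (neg_lt_zero.mpr hγ)
    have := ge_of_tendsto ht (by
      filter_upwards [eventually_ge_atTop 1] with j hj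
      exact hub j hj)
    simpa using this
  -- summability of |c (k+1)|
  have hc_abs_sum : Summable (fun k : ℕ => |c (k + 1)|) := by
    refine Summable.of_nonneg_of_le (fun k => abs_nonneg _) (fun k => ?_)
      ((aux_summable_exp hγ hα0).mul_left C)
    have := hc_bound (k+1) (by omega)
    simpa [Nat.cast_add_one] using this
  have hcsum : Summable (fun k : ℕ => c (k + 1)) := hc_abs_sum.of_abs
  set L : ℝ := ∑' k, c (k+1) with hL
  refine ⟨hc_abs_sum, ?_⟩
  -- per-term error bound on off-diagonal terms
  have herr : ∀ j n : ℕ, 1 ≤ j → j < n →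
      |cov (ξ j) (ξ n) P - c (n - j)| ≤ 2*C*(e j * e (n-j)) := by
    intro j n hj hjn
    have hcast : ((n - j : ℕ):ℝ) = (n:ℝ) - (j:ℝ) := by
      push_cast [Nat.cast_sub hjn.le]; ring
    have hepos : (0:ℝ) < e j * e (n-j) := mul_pos (he_pos _) (he_pos _)
    rcases le_total j (n-j) with hle | hle
    · -- use mixing bound + |c| bound
      have h1 := hcov_mix j n hj hjn
      have h2 := hc_bound (n-j) (by omega)
      have h3 : |cov (ξ j) (ξ n) P - c (n - j)| ≤ |cov (ξ j) (ξ n) P| + |c (n-j)| :=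
        abs_sub _ _
      have h4 : Real.exp (-γ * (((n-j:ℕ)):ℝ)^α) ≤ e j * e (n-j) := hprodN j (n-j) (n-j) hle le_rfl
      rw [hcast] at h4
      calc |cov (ξ j) (ξ n) P - c (n - j)| ≤ |cov (ξ j) (ξ n) P| + |c (n-j)| := h3
        _ ≤ C * Real.exp (-γ * ((n:ℝ)-(j:ℝ))^α) + C * Real.exp (-γ * ((n-j:ℕ):ℝ)^α) :=
            add_le_add h1 h2
        _ = 2*C* Real.exp (-γ * ((n:ℝ)-(j:ℝ))^α) := by rw [hcast]; ring
        _ ≤ 2*C*(e j * e (n-j)) := by nlinarith [hC]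
    · -- use stationarity bound
      have h1 := hcov_st j n hj hjn
      have h4 : Real.exp (-γ * ((j:ℝ))^α) ≤ e j * e (n-j) := hprodN j (n-j) j le_rfl hle
      calc |cov (ξ j) (ξ n) P - c (n - j)| ≤ C * Real.exp (-γ * (j:ℝ)^α) := h1
        _ ≤ C * (e j * e (n-j)) := mul_le_mul_of_nonneg_left h4 hC.le
        _ ≤ 2*C*(e j * e (n-j)) := by nlinarith [hC]
  -- tail bound
  have htail : ∀ n : ℕ, 1 ≤ n → |∑' i : ℕ, c (i + (n-1) + 1)| ≤ C*E* e n := by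
    intro n hn
    set m := n - 1 with hm
    have hmn : m + 1 = n := by omega
    have hshift : Summable (fun i : ℕ => |c (i + m + 1)|) := by
      have := (summable_nat_add_iff m).2 hc_abs_sum
      exact this
    have hshift' : Summable (fun i : ℕ => c (i + m + 1)) := hshift.of_abs
    have hbnd : ∀ i : ℕ, |c (i + m + 1)| ≤ (C * e n) * e (i+1) := by
      intro i
      have h1 := hc_bound (i + m + 1) (by omega)
      have h2 : Real.exp (-γ * ((i+m+1:ℕ):ℝ)^α) ≤ e (i+1) * e n :=
        hprodN (i+1) n (i+m+1) (by omega) (by omega)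
      calc |c (i + m + 1)| ≤ C * Real.exp (-γ * ((i+m+1:ℕ):ℝ)^α) := h1
        _ ≤ C * (e (i+1) * e n) := mul_le_mul_of_nonneg_left h2 hC.le
        _ = (C * e n) * e (i+1) := by ring
    calc |∑' i : ℕ, c (i + m + 1)| ≤ ∑' i : ℕ, |c (i + m + 1)| := by
          have := norm_tsum_le_tsum_norm (f := fun i : ℕ => c (i + m + 1)) (by simpa using hshift)
          simpa using this
      _ ≤ ∑' i : ℕ, (C * e n) * e (i+1) :=
          Summable.tsum_le_tsum hbnd hshift (he_sum.mul_left _)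
      _ = (C * e n) * E := by rw [tsum_mul_left]
      _ = C*E*e n := by ring
  -- reindexing of the c-sum
  have hsum_c : ∀ n : ℕ, 1 ≤ n →
      ∑ j ∈ Finset.Ico 1 n, c (n - j) = ∑ i ∈ Finset.range (n-1), c (i+1) := by
    intro n hn
    rw [Finset.sum_Ico_eq_sum_range]
    have hrefl := Finset.sum_range_reflect (fun i => c (i+1)) (n-1)
    have h1 : ∀ i ∈ Finset.range (n-1), c (n - (1+i)) = c ((n-1) - 1 - i + 1) := by
      intro i hi
      have := Finset.mem_range.1 hi
      congr 1
      omega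
    exact (Finset.sum_congr rfl h1).trans hrefl
  -- the main quantitative bound
  set B : ℝ := C*E + 2*(2*C*(E*E) + C*E*E) with hB
  have key : ∀ N : ℕ, 1 ≤ N →
      |variance (fun ω => ∑ n ∈ Finset.Icc 1 N, ξ n ω) P - (N:ℝ) * (σ2 + 2*L)| ≤ B := by
    intro N hN
    rw [aux_var_sum ξ N (fun n hn => hℒ2 n (Finset.mem_Icc.mp hn).1),
      aux_sum_decomp _ (fun j n => aux_cov_comm _ _) N]
    -- diagonal part
    have hdiag : |∑ n ∈ Finset.Icc 1 N, cov (ξ n) (ξ n) P - (N:ℝ)*σ2| ≤ C*E := by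
      have h1 : (N:ℝ)*σ2 = ∑ _n ∈ Finset.Icc 1 N, σ2 := by
        rw [Finset.sum_const, Nat.card_Icc, Nat.add_sub_cancel, nsmul_eq_mul]
      rw [h1, ← Finset.sum_sub_distrib]
      calc |∑ n ∈ Finset.Icc 1 N, (cov (ξ n) (ξ n) P - σ2)|
          ≤ ∑ n ∈ Finset.Icc 1 N, |cov (ξ n) (ξ n) P - σ2| := Finset.abs_sum_le_sum_abs _ _
        _ ≤ ∑ n ∈ Finset.Icc 1 N, C * e n := by
            apply Finset.sum_le_sum
            intro n hn
            have hn1 : 1 ≤ n := (Finset.mem_Icc.mp hn).1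
            have h2 := hvar n hn1
            rw [aux_var_eq_cov (hℒ2 n hn1)] at h2
            exact h2.trans (mul_le_mul_of_nonneg_left (hee n) hC.le)
        _ = C * ∑ n ∈ Finset.Icc 1 N, e n := by rw [Finset.mul_sum]
        _ ≤ C * E := mul_le_mul_of_nonneg_left (hsum_le N) hC.le
    -- off-diagonal part
    have hoff : |∑ n ∈ Finset.Icc 1 N, ∑ j ∈ Finset.Ico 1 n, cov (ξ j) (ξ n) P - (N:ℝ)*L|
        ≤ 2*C*(E*E) + C*E*E := by
      have h1 : (N:ℝ)*L = ∑ _n ∈ Finset.Icc 1 N, L := by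
        rw [Finset.sum_const, Nat.card_Icc, Nat.add_sub_cancel, nsmul_eq_mul]
      rw [h1, ← Finset.sum_sub_distrib]
      have hper : ∀ n ∈ Finset.Icc 1 N,
          |∑ j ∈ Finset.Ico 1 n, cov (ξ j) (ξ n) P - L|
            ≤ (∑ j ∈ Finset.Ico 1 n, 2*C*(e j * e (n-j))) + C*E*e n := by
        intro n hn
        obtain ⟨hn1, hnN⟩ := Finset.mem_Icc.mp hn
        have heq : ∑ j ∈ Finset.Ico 1 n, cov (ξ j) (ξ n) P - L
            = (∑ j ∈ Finset.Ico 1 n, (cov (ξ j) (ξ n) P - c (n-j)))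
              + -(∑' i : ℕ, c (i + (n-1) + 1)) := by
          rw [Finset.sum_sub_distrib, hsum_c n hn1]
          have h := Summable.sum_add_tsum_nat_add (n-1) hcsum
          have h' : ∑ i ∈ Finset.range (n-1), c (i+1) + ∑' i : ℕ, c (i + (n-1) + 1) = L := by
            rw [hL]
            exact h
          linarith [h']
        rw [heq]
        apply (abs_add_le _ _).trans
        rw [abs_neg]
        apply add_le_add
        · calc |∑ j ∈ Finset.Ico 1 n, (cov (ξ j) (ξ n) P - c (n-j))|
              ≤ ∑ j ∈ Finset.Ico 1 n, |cov (ξ j) (ξ n) P - c (n-j)| :=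
                Finset.abs_sum_le_sum_abs _ _
            _ ≤ ∑ j ∈ Finset.Ico 1 n, 2*C*(e j * e (n-j)) := by
                apply Finset.sum_le_sum
                intro j hj
                obtain ⟨hj1, hjn⟩ := Finset.mem_Ico.mp hj
                exact herr j n hj1 hjn
        · exact htail n hn1
      calc |∑ n ∈ Finset.Icc 1 N, (∑ j ∈ Finset.Ico 1 n, cov (ξ j) (ξ n) P - L)|
          ≤ ∑ n ∈ Finset.Icc 1 N, |∑ j ∈ Finset.Ico 1 n, cov (ξ j) (ξ n) P - L| :=
            Finset.abs_sum_le_sum_abs _ _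
        _ ≤ ∑ n ∈ Finset.Icc 1 N,
            ((∑ j ∈ Finset.Ico 1 n, 2*C*(e j * e (n-j))) + C*E*e n) :=
            Finset.sum_le_sum hper
        _ = (∑ n ∈ Finset.Icc 1 N, ∑ j ∈ Finset.Ico 1 n, 2*C*(e j * e (n-j)))
            + ∑ n ∈ Finset.Icc 1 N, C*E*e n := Finset.sum_add_distrib
        _ ≤ 2*C*(E*E) + C*E*E := by
            apply add_le_add
            · -- the double sum
              have hIcc : Finset.Icc 1 N = Finset.Ico 1 (N+1) := (Finset.Ico_add_one_right_eq_Icc 1 N).symm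
              rw [hIcc, ← Finset.sum_Ico_Ico_comm']
              calc ∑ j ∈ Finset.Ico 1 (N+1), ∑ n ∈ Finset.Ico (j+1) (N+1), 2*C*(e j * e (n-j))
                  ≤ ∑ j ∈ Finset.Ico 1 (N+1), 2*C*e j*E := by
                    apply Finset.sum_le_sum
                    intro j _
                    have hinner : ∑ n ∈ Finset.Ico (j+1) (N+1), e (n-j)
                        = ∑ i ∈ Finset.range (N+1-(j+1)), e (i+1) := by
                      rw [Finset.sum_Ico_eq_sum_range]
                      apply Finset.sum_congr rfl
                      intro i _
                      congr 1
                      omega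
                    calc ∑ n ∈ Finset.Ico (j+1) (N+1), 2*C*(e j * e (n-j))
                        = 2*C*e j * ∑ n ∈ Finset.Ico (j+1) (N+1), e (n-j) := by
                          rw [Finset.mul_sum]
                          exact Finset.sum_congr rfl fun n _ => by ring
                      _ ≤ 2*C*e j * E := by
                          apply mul_le_mul_of_nonneg_left _
                            (by nlinarith [hC, he_pos j])
                          rw [hinner]
                          exact hrange_le _
                _ = 2*C*E * ∑ j ∈ Finset.Ico 1 (N+1), e j := by
                    rw [Finset.mul_sum]
                    exact Finset.sum_congr rfl fun j _ => by ring
                _ ≤ 2*C*(E*E) := by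
                    have h5 := hsum_le N
                    rw [hIcc] at h5
                    calc 2*C*E * ∑ j ∈ Finset.Ico 1 (N+1), e j ≤ 2*C*E*E := by
                          apply mul_le_mul_of_nonneg_left h5 (by nlinarith [hC, hE0])
                      _ = 2*C*(E*E) := by ring
            · have hst : ∑ n ∈ Finset.Icc 1 N, C*E*e n = C*E * ∑ n ∈ Finset.Icc 1 N, e n :=
                (Finset.mul_sum _ _ _).symm
              rw [hst]
              have : C*E * ∑ n ∈ Finset.Icc 1 N, e n ≤ C*E*E :=
                mul_le_mul_of_nonneg_left (hsum_le N) (mul_nonneg hC.le hE0)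
              linarith
    calc |(∑ n ∈ Finset.Icc 1 N, cov (ξ n) (ξ n) P
          + 2 * ∑ n ∈ Finset.Icc 1 N, ∑ j ∈ Finset.Ico 1 n, cov (ξ j) (ξ n) P)
          - (N:ℝ) * (σ2 + 2*L)|
        = |(∑ n ∈ Finset.Icc 1 N, cov (ξ n) (ξ n) P - (N:ℝ)*σ2)
          + 2 * (∑ n ∈ Finset.Icc 1 N, ∑ j ∈ Finset.Ico 1 n, cov (ξ j) (ξ n) P - (N:ℝ)*L)| := by
          congr 1
          ring
      _ ≤ |∑ n ∈ Finset.Icc 1 N, cov (ξ n) (ξ n) P - (N:ℝ)*σ2|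
          + |2 * (∑ n ∈ Finset.Icc 1 N, ∑ j ∈ Finset.Ico 1 n, cov (ξ j) (ξ n) P - (N:ℝ)*L)| :=
          abs_add_le _ _
      _ ≤ C*E + 2*(2*C*(E*E) + C*E*E) := by
          rw [abs_mul, abs_two]
          exact add_le_add hdiag (by linarith [hoff])
      _ = B := rfl
  -- conclude
  have hdiffto : Tendsto (fun N : ℕ =>
      variance (fun ω => ∑ n ∈ Finset.Icc 1 N, ξ n ω) P / (N:ℝ) - (σ2 + 2*L))
      atTop (nhds 0) := by
    apply squeeze_zero_norm' (a := fun N : ℕ => B / (N:ℝ))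
    · filter_upwards [eventually_ge_atTop 1] with N hN
      have hNpos : (0:ℝ) < (N:ℝ) := by exact_mod_cast hN
      rw [Real.norm_eq_abs]
      have h1 : variance (fun ω => ∑ n ∈ Finset.Icc 1 N, ξ n ω) P / (N:ℝ) - (σ2 + 2*L)
          = (variance (fun ω => ∑ n ∈ Finset.Icc 1 N, ξ n ω) P - (N:ℝ)*(σ2 + 2*L)) / (N:ℝ) := by
        field_simp
      rw [h1, abs_div, abs_of_pos hNpos]
      exact div_le_div_of_nonneg_right (key N hN) hNpos.le
    · exact tendsto_const_div_atTop_nhds_zero_nat B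
  have hfin := hdiffto.add (tendsto_const_nhds (x := σ2 + 2*L))
  simp only [zero_add] at hfin
  have h2 : (fun N : ℕ => variance (fun ω => ∑ n ∈ Finset.Icc 1 N, ξ n ω) P / (N:ℝ))
      = fun N : ℕ => (variance (fun ω => ∑ n ∈ Finset.Icc 1 N, ξ n ω) P / (N:ℝ)
          - (σ2 + 2*L)) + (σ2 + 2*L) := funext fun N => by ring
  rw [h2]
  exact hfin
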